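/- Let G be a minimal counterexample to the statement that all planar graphs have 3-weak-dynamic number at most 6, chosen with the fewest edges and, among those, the fewest vertices. Then G has no vertex of degree 2 adjacent to a vertex of degree at most 3. -/

import Mathlib

open SimpleGraph

/-- `H` is a minor of `G`: there are nonempty, connected, pairwise disjoint branch sets
in `G`, with an edge of `G` between the branch sets of any two adjacent vertices of `H`. -/
def HasMinor {V W : Type} (G : SimpleGraph V) (H : SimpleGraph W) : Prop :=
  ∃ f : W → Set V,
    (∀ w, (f w).Nonempty) ∧
    (∀ w, (G.induce (f w)).Connected) ∧
    (∀ w w', w ≠ w' → Disjoint (f w) (f w')) ∧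
    (∀ w w', H.Adj w w' → ∃ a ∈ f w, ∃ b ∈ f w', G.Adj a b)

/-- A graph is planar iff it has no `K₅` minor and no `K_{3,3}` minor (Wagner's theorem). -/
def IsPlanar {V : Type} (G : SimpleGraph V) : Prop :=
  ¬ HasMinor G (⊤ : SimpleGraph (Fin 5)) ∧
  ¬ HasMinor G (completeBipartiteGraph (Fin 3) (Fin 3))

/-- The degree of a vertex `v`, the number of its neighbors. -/
noncomputable def deg {V : Type} (G : SimpleGraph V) (v : V) : ℕ :=
  (G.neighborSet v).ncard

/-- `G` admits a `k`-weak-dynamic coloring with `n` colors: a (not necessarily proper)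
coloring such that every vertex `v` sees at least `min k (d v)` colors on its neighborhood. -/
def WDColorable {V : Type} (G : SimpleGraph V) (k n : ℕ) : Prop :=
  ∃ c : V → Fin n, ∀ v, min k (deg G v) ≤ (c '' G.neighborSet v).ncard


/-- A minimal counterexample has no vertex of degree 2 adjacent to a vertex of degree at most 3. -/
lemma exists_notin_of_ncard_le (F : Set (Fin 6)) (h : F.ncard ≤ 5) : ∃ b, b ∉ F := by
  by_contra hc
  push_neg at hc
  have he : F = Set.univ := Set.eq_univ_of_forall hc
  rw [he, Set.ncard_univ] at h
  simp [Nat.card_eq_fintype_card] at h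

lemma cnt1 (B : Set (Fin 6)) (m : ℕ) (hm3 : m ≤ 3) (hmB : m ≤ B.ncard + 1)
    (β : Fin 6) (hβ : β ∉ (if B.ncard ≤ 2 then B else ∅)) :
    m ≤ (insert β B).ncard := by
  by_cases h : B.ncard ≤ 2
  · rw [if_pos h] at hβ
    rw [Set.ncard_insert_of_notMem hβ]
    omega
  · calc m ≤ 3 := hm3
      _ ≤ B.ncard := by omega
      _ ≤ (insert β B).ncard := Set.ncard_le_ncard (Set.subset_insert _ _)

lemma cnt2 (B : Set (Fin 6)) (m : ℕ) (hm3 : m ≤ 3) (hmB : m ≤ B.ncard + 2)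
    (α β : Fin 6) (hne : α ≠ β)
    (hα : α ∉ (if B.ncard ≤ 2 then B else ∅)) (hβ : β ∉ (if B.ncard ≤ 2 then B else ∅)) :
    m ≤ (insert α (insert β B)).ncard := by
  by_cases h : B.ncard ≤ 2
  · rw [if_pos h] at hα hβ
    rw [Set.ncard_insert_of_notMem (by simp [Set.mem_insert_iff, hne, hα]),
      Set.ncard_insert_of_notMem hβ]
    omega
  · calc m ≤ 3 := hm3
      _ ≤ B.ncard := by omega
      _ ≤ _ := Set.ncard_le_ncard (fun x hx => by simp [hx])

lemma subset_pair_of_ncard_le_two {γ : Type} [Nonempty γ] (s : Set γ) (hfin : s.Finite)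
    (h : s.ncard ≤ 2) : ∃ a b : γ, s ⊆ {a, b} := by
  rcases s.eq_empty_or_nonempty with rfl | ⟨a, ha⟩
  · exact ⟨Classical.arbitrary γ, Classical.arbitrary γ, by simp⟩
  rcases (s \ {a}).eq_empty_or_nonempty with he | ⟨b, hb⟩
  · refine ⟨a, a, fun x hx => ?_⟩
    have : x ∈ s \ {a} ∨ x = a := by
      by_cases hxa : x = a
      · exact Or.inr hxa
      · exact Or.inl ⟨hx, hxa⟩
    rcases this with h' | rfl
    · rw [he] at h'; exact absurd h' (Set.notMem_empty x)
    · simp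
  · refine ⟨a, b, fun x hx => ?_⟩
    by_contra hxab
    simp only [Set.mem_insert_iff, Set.mem_singleton_iff, not_or] at hxab
    have hdiff : (s \ {a}).ncard ≤ 1 := by
      rw [Set.ncard_diff_singleton_of_mem ha]; omega
    have hxb : ({x, b} : Set γ) ⊆ s \ {a} := by
      rintro y (rfl | rfl)
      · exact ⟨hx, hxab.1⟩
      · exact hb
    have := Set.ncard_le_ncard hxb hfin.diff
    rw [Set.ncard_pair hxab.2] at this
    omega

lemma hasMinor_mono {V : Type} {G G' : SimpleGraph V} (h : G ≤ G')
    {W : Type} {H : SimpleGraph W} (hm : HasMinor G H) : HasMinor G' H := by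
  obtain ⟨f, h1, h2, h3, h4⟩ := hm
  refine ⟨f, h1, fun w => (h2 w).mono (fun a b hab => h hab), h3, fun w w' hw => ?_⟩
  obtain ⟨a, ha, b, hb, hab⟩ := h4 w w' hw
  exact ⟨a, ha, b, hb, h hab⟩

theorem minCounterexample_no_deg2_with_deg3_neighbor {V : Type} [Fintype V] (G : SimpleGraph V)
    (hplanar : IsPlanar G) (hcex : ¬ WDColorable G 3 6)
    (hminEdges : ∀ (W : Type) [Fintype W] (H : SimpleGraph W),
      IsPlanar H → H.edgeSet.ncard < G.edgeSet.ncard → WDColorable H 3 6)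
    (hminVerts : ∀ (W : Type) [Fintype W] (H : SimpleGraph W),
      IsPlanar H → ¬ WDColorable H 3 6 → H.edgeSet.ncard = G.edgeSet.ncard →
      Nat.card V ≤ Nat.card W) :
    ¬ ∃ u v : V, G.Adj u v ∧ deg G u = 2 ∧ deg G v ≤ 3 := by
  classical
  rintro ⟨u, v, huv, hdu, hdv⟩
  have huv' : u ≠ v := huv.ne
  set G' := G.deleteEdges {s(u, v)} with hG'
  have hle : G' ≤ G := SimpleGraph.deleteEdges_le _
  have hplanar' : IsPlanar G' :=
    ⟨fun h => hplanar.1 (hasMinor_mono hle h), fun h => hplanar.2 (hasMinor_mono hle h)⟩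
  have hedge : G'.edgeSet.ncard < G.edgeSet.ncard := by
    rw [hG', SimpleGraph.edgeSet_deleteEdges]
    exact Set.ncard_lt_ncard
      (Set.sdiff_singleton_ssubset.mpr (G.mem_edgeSet.mpr huv)) (G.edgeSet.toFinite)
  obtain ⟨c, hc⟩ := hminEdges V G' hplanar' hedge
  -- the other neighbor w of u
  have hdu' : (G.neighborSet u).ncard = 2 := hdu
  obtain ⟨a, b, hab, hNuab⟩ := Set.ncard_eq_two.mp hdu'
  have hvmem : v ∈ ({a, b} : Set V) := hNuab ▸ (G.mem_neighborSet u v).mpr huv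
  have hW : ∃ w, w ≠ v ∧ G.neighborSet u = {v, w} := by
    rcases hvmem with rfl | rfl
    · exact ⟨b, Ne.symm hab, hNuab⟩
    · exact ⟨a, hab, by rw [hNuab, Set.pair_comm]⟩
  obtain ⟨w, hwv, hNu⟩ := hW
  have hwmem : w ∈ G.neighborSet u := by rw [hNu]; simp
  have hadj_uw : G.Adj u w := (G.mem_neighborSet u w).mp hwmem
  have hwu : w ≠ u := hadj_uw.ne'
  -- D = other neighbors of v
  set D := G.neighborSet v \ {u} with hD
  have humem : u ∈ G.neighborSet v := (G.mem_neighborSet v u).mpr huv.symm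
  have hdv' : (G.neighborSet v).ncard ≤ 3 := hdv
  have hdegv_pos : 1 ≤ (G.neighborSet v).ncard :=
    (Set.ncard_pos (Set.toFinite _)).mpr ⟨u, humem⟩
  have hDcard : D.ncard = (G.neighborSet v).ncard - 1 :=
    Set.ncard_diff_singleton_of_mem humem
  have hD2 : D.ncard ≤ 2 := by omega
  -- neighbor sets in G'
  have hNv' : G'.neighborSet v = D := by
    ext x
    constructor
    · intro hx
      have hx' := SimpleGraph.deleteEdges_adj.mp hx
      refine ⟨hx'.1, fun hxu => hx'.2 ?_⟩
      have hxu' : x = u := Set.mem_singleton_iff.mp hxu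
      rw [Set.mem_singleton_iff, hxu', Sym2.eq_swap]
    · rintro ⟨hx1, hx2⟩
      refine SimpleGraph.deleteEdges_adj.mpr ⟨hx1, fun hmem => ?_⟩
      rw [Set.mem_singleton_iff, Sym2.eq_iff] at hmem
      rcases hmem with ⟨hvu, -⟩ | ⟨-, hxu⟩
      · exact huv' hvu.symm
      · exact hx2 (Set.mem_singleton_iff.mpr hxu)
  have hNother : ∀ y, y ≠ u → y ≠ v → G'.neighborSet y = G.neighborSet y := by
    intro y hyu hyv
    ext z
    constructor
    · exact fun h => (SimpleGraph.deleteEdges_adj.mp h).1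
    · intro h
      refine SimpleGraph.deleteEdges_adj.mpr ⟨h, fun hmem => ?_⟩
      rw [Set.mem_singleton_iff, Sym2.eq_iff] at hmem
      rcases hmem with ⟨h1, -⟩ | ⟨h1, -⟩
      · exact hyu h1
      · exact hyv h1
  have hdegother : ∀ y, y ≠ u → y ≠ v → deg G' y = deg G y := by
    intro y hyu hyv
    unfold deg
    rw [hNother y hyu hyv]
  -- the colors to avoid
  set g : V → Set (Fin 6) := fun x => c '' (G.neighborSet x \ {u, v}) with hg
  set pick : V → Set (Fin 6) := fun x => if (g x).ncard ≤ 2 then g x else ∅ with hpick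
  have hpick2 : ∀ x, (pick x).ncard ≤ 2 := by
    intro x
    simp only [hpick]
    by_cases h : (g x).ncard ≤ 2
    · rw [if_pos h]; exact h
    · rw [if_neg h]; simp
  have : Nonempty V := ⟨u⟩
  obtain ⟨x₁, x₂, hDsub⟩ := subset_pair_of_ncard_le_two D (Set.toFinite _) hD2
  obtain ⟨β, hβ⟩ := exists_notin_of_ncard_le ({c w} ∪ (pick x₁ ∪ pick x₂)) (by
    calc ({c w} ∪ (pick x₁ ∪ pick x₂)).ncard
        ≤ ({c w} : Set (Fin 6)).ncard + (pick x₁ ∪ pick x₂).ncard := Set.ncard_union_le _ _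
      _ ≤ 1 + ((pick x₁).ncard + (pick x₂).ncard) := by
          gcongr
          · simp
          · exact Set.ncard_union_le _ _
      _ ≤ 5 := by have := hpick2 x₁; have := hpick2 x₂; omega)
  have hβw : β ≠ c w := by
    intro h; exact hβ (Set.mem_union_left _ (by simp [h]))
  have hβx : ∀ x ∈ D, β ∉ pick x := by
    intro x hx hmem
    rcases hDsub hx with rfl | rfl
    · exact hβ (Set.mem_union_right _ (Set.mem_union_left _ hmem))
    · exact hβ (Set.mem_union_right _ (Set.mem_union_right _ hmem))
  obtain ⟨α, hα⟩ := exists_notin_of_ncard_le ((c '' D ∪ pick w) ∪ {β}) (by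
    calc ((c '' D ∪ pick w) ∪ {β}).ncard
        ≤ (c '' D ∪ pick w).ncard + ({β} : Set (Fin 6)).ncard := Set.ncard_union_le _ _
      _ ≤ ((c '' D).ncard + (pick w).ncard) + 1 := by
          gcongr
          · exact Set.ncard_union_le _ _
          · simp
      _ ≤ 5 := by
          have h1 : (c '' D).ncard ≤ D.ncard := Set.ncard_image_le (Set.toFinite _)
          have := hpick2 w
          omega)
  have hαD : α ∉ c '' D := fun h => hα (Set.mem_union_left _ (Set.mem_union_left _ h))
  have hαw : α ∉ pick w := fun h => hα (Set.mem_union_left _ (Set.mem_union_right _ h))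
  have hαβ : α ≠ β := fun h => hα (Set.mem_union_right _ (by simp [h]))
  -- the new coloring
  set c' : V → Fin 6 := fun x => if x = u then α else if x = v then β else c x with hc'
  have hc'u : c' u = α := by simp [hc']
  have hc'v : c' v = β := by simp [hc', Ne.symm huv']
  have hc'other : ∀ x, x ≠ u → x ≠ v → c' x = c x := by
    intro x hxu hxv; simp [hc', hxu, hxv]
  have himg : ∀ S : Set V, u ∉ S → v ∉ S → c' '' S = c '' S := by
    intro S hu hv
    exact Set.image_congr fun x hx =>
      hc'other x (fun h => hu (h ▸ hx)) (fun h => hv (h ▸ hx))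
  -- verify the coloring
  refine hcex ⟨c', fun x => ?_⟩
  by_cases hxu : x = u
  · rw [hxu, hNu, Set.image_pair, hc'v, hc'other w hwu hwv, hdu, Set.ncard_pair hβw]
    simp
  by_cases hxv : x = v
  · rw [hxv]
    have hNvins : G.neighborSet v = insert u D := by
      rw [hD, Set.insert_diff_singleton, Set.insert_eq_of_mem humem]
    have hvnD : v ∉ D := by
      intro h
      exact G.irrefl ((G.mem_neighborSet v v).mp h.1)
    have hunD : u ∉ D := by simp [hD]
    have himgD : c' '' D = c '' D := himg D hunD hvnD
    have hcard_cD : (c '' D).ncard = D.ncard := by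
      have h1 := hc v
      rw [hNv'] at h1
      have h2 : deg G' v = D.ncard := by unfold deg; rw [hNv']
      rw [h2] at h1
      have h3 : min 3 D.ncard = D.ncard := min_eq_right (by omega)
      rw [h3] at h1
      exact le_antisymm (Set.ncard_image_le (Set.toFinite _)) h1
    rw [hNvins, Set.image_insert_eq, hc'u, himgD,
      Set.ncard_insert_of_notMem hαD]
    unfold deg
    omega
  -- x ≠ u, x ≠ v
  have hm : min 3 (deg G x) ≤ (c '' G.neighborSet x).ncard := by
    have := hc x
    rwa [hdegother x hxu hxv, hNother x hxu hxv] at this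
  have hm3 : min 3 (deg G x) ≤ 3 := min_le_left _ _
  by_cases hxw : x = w
  · rw [hxw] at hm hm3 ⊢
    by_cases hvw : v ∈ G.neighborSet w
    · -- triangle case
      have hwD : w ∈ D := ⟨(G.mem_neighborSet v w).mpr ((G.mem_neighborSet w v).mp hvw).symm, hwu⟩
      have hNw : G.neighborSet w = insert u (insert v (G.neighborSet w \ {u, v})) := by
        ext y
        simp only [Set.mem_insert_iff, Set.mem_diff, Set.mem_singleton_iff, not_or]
        constructor
        · intro h
          by_cases h1 : y = u
          · exact Or.inl h1
          by_cases h2 : y = v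
          · exact Or.inr (Or.inl h2)
          · exact Or.inr (Or.inr ⟨h, h1, h2⟩)
        · rintro (h' | h' | ⟨h, -⟩)
          · rw [h']; exact (G.mem_neighborSet w u).mpr hadj_uw.symm
          · rw [h']; exact hvw
          · exact h
      have himgB : c' '' (G.neighborSet w \ {u, v}) = g w :=
        himg _ (by simp) (by simp)
      have hsub : c '' G.neighborSet w ⊆ insert (c u) (insert (c v) (g w)) := by
        rintro y ⟨z, hz, rfl⟩
        by_cases h1 : z = u
        · rw [h1]; simp
        by_cases h2 : z = v
        · rw [h2]; simp
        · have hz' : z ∈ G.neighborSet w \ {u, v} := by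
            refine ⟨hz, ?_⟩
            simp only [Set.mem_insert_iff, Set.mem_singleton_iff, not_or]
            exact ⟨h1, h2⟩
          exact Set.mem_insert_iff.mpr (Or.inr (Set.mem_insert_iff.mpr
            (Or.inr ⟨z, hz', rfl⟩)))
      have hB2 : (c '' G.neighborSet w).ncard ≤ (g w).ncard + 2 := by
        calc (c '' G.neighborSet w).ncard
            ≤ (insert (c u) (insert (c v) (g w))).ncard :=
              Set.ncard_le_ncard hsub (Set.toFinite _)
          _ ≤ (insert (c v) (g w)).ncard + 1 := Set.ncard_insert_le _ _
          _ ≤ (g w).ncard + 1 + 1 := by gcongr; exact Set.ncard_insert_le _ _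
          _ = (g w).ncard + 2 := by ring
      rw [hNw, Set.image_insert_eq, Set.image_insert_eq, hc'u, hc'v, himgB]
      exact cnt2 (g w) _ hm3 (hm.trans hB2) α β hαβ hαw (hβx w hwD)
    · -- w not adjacent to v
      have hNw : G.neighborSet w = insert u (G.neighborSet w \ {u, v}) := by
        ext y
        simp only [Set.mem_insert_iff, Set.mem_diff, Set.mem_singleton_iff, not_or]
        constructor
        · intro h
          by_cases h1 : y = u
          · exact Or.inl h1
          · refine Or.inr ⟨h, h1, ?_⟩
            rintro rfl
            exact hvw h
        · rintro (h' | ⟨h, -⟩)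
          · rw [h']; exact (G.mem_neighborSet w u).mpr hadj_uw.symm
          · exact h
      have himgB : c' '' (G.neighborSet w \ {u, v}) = g w :=
        himg _ (by simp) (by simp)
      have hsub : c '' G.neighborSet w ⊆ insert (c u) (g w) := by
        rintro y ⟨z, hz, rfl⟩
        by_cases h1 : z = u
        · rw [h1]; simp
        · have hz' : z ∈ G.neighborSet w \ {u, v} := by
            refine ⟨hz, ?_⟩
            simp only [Set.mem_insert_iff, Set.mem_singleton_iff, not_or]
            exact ⟨h1, fun h2 => hvw (h2 ▸ hz)⟩
          exact Set.mem_insert_iff.mpr (Or.inr ⟨z, hz', rfl⟩)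
      have hB1 : (c '' G.neighborSet w).ncard ≤ (g w).ncard + 1 := by
        calc (c '' G.neighborSet w).ncard
            ≤ (insert (c u) (g w)).ncard := Set.ncard_le_ncard hsub (Set.toFinite _)
          _ ≤ (g w).ncard + 1 := Set.ncard_insert_le _ _
      rw [hNw, Set.image_insert_eq, hc'u, himgB]
      exact cnt1 (g w) _ hm3 (hm.trans hB1) α hαw
  -- x ∉ {u, v, w}
  have hux : u ∉ G.neighborSet x := by
    intro h
    have hx' : x ∈ G.neighborSet u := (G.mem_neighborSet u x).mpr ((G.mem_neighborSet x u).mp h).symm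
    rw [hNu] at hx'
    rcases hx' with h' | h'
    · exact hxv h'
    · exact hxw h'
  by_cases hxD : x ∈ D
  · -- neighbor of v other than u, and x ≠ w
    have hvx : v ∈ G.neighborSet x := (G.mem_neighborSet x v).mpr hxD.1.symm
    have hNx : G.neighborSet x = insert v (G.neighborSet x \ {u, v}) := by
      ext y
      simp only [Set.mem_insert_iff, Set.mem_diff, Set.mem_singleton_iff, not_or]
      constructor
      · intro h
        by_cases h2 : y = v
        · exact Or.inl h2
        · refine Or.inr ⟨h, ?_, h2⟩
          rintro rfl
          exact hux h
      · rintro (h' | ⟨h, -⟩)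
        · rw [h']; exact hvx
        · exact h
    have himgB : c' '' (G.neighborSet x \ {u, v}) = g x :=
      himg _ (by simp) (by simp)
    have hsub : c '' G.neighborSet x ⊆ insert (c v) (g x) := by
      rintro y ⟨z, hz, rfl⟩
      by_cases h2 : z = v
      · rw [h2]; simp
      · have hz' : z ∈ G.neighborSet x \ {u, v} := by
          refine ⟨hz, ?_⟩
          simp only [Set.mem_insert_iff, Set.mem_singleton_iff, not_or]
          exact ⟨fun h1 => hux (h1 ▸ hz), h2⟩
        exact Set.mem_insert_iff.mpr (Or.inr ⟨z, hz', rfl⟩)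
    have hB1 : (c '' G.neighborSet x).ncard ≤ (g x).ncard + 1 := by
      calc (c '' G.neighborSet x).ncard
          ≤ (insert (c v) (g x)).ncard := Set.ncard_le_ncard hsub (Set.toFinite _)
        _ ≤ (g x).ncard + 1 := Set.ncard_insert_le _ _
    rw [hNx, Set.image_insert_eq, hc'v, himgB]
    exact cnt1 (g x) _ hm3 (hm.trans hB1) β (hβx x hxD)
  · -- x sees neither u nor v
    have hvx : v ∉ G.neighborSet x := by
      intro h
      exact hxD ⟨(G.mem_neighborSet v x).mpr ((G.mem_neighborSet x v).mp h).symm, hxu⟩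
    rw [himg _ hux hvx]
    exact hm
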